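/- Fix T₀ > 0, let Ω be a measurable space and let E, E' be measurable spaces; equip the path spaces ([0,T₀] → E) and ([0,T₀] → E') with the product (cylinder) σ-algebras. Let y₀ : Ω → ([0,T₀] → E) be measurable and let F : ([0,T₀] → E) → ([0,T₀] → E') be a bijection such that both F and F⁻¹ are measurable and causal, where a map between path spaces is causal if for every τ ∈ [0,T₀] and all paths x, x', the equality x(s) = x'(s) for all s ≤ τ implies equality of the images at all s ≤ τ. Define y := F ∘ y₀. Then for every t ∈ [0,T₀], the σ-algebra on Ω generated by the maps ω ↦ y(ω)(s), s ∈ [0,t], equals the σ-algebra generated by the maps ω ↦ y₀(ω)(s), s ∈ [0,t]. -/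

import Mathlib

/-- Auxiliary: for a causal measurable `F`, the natural filtration of `F ∘ w`
is contained in that of `w`. -/
lemma stmt_6_aux {Ω E E' : Type*} [MeasurableSpace Ω] [MeasurableSpace E] [MeasurableSpace E']
    {T₀ : ℝ} (w : Ω → Set.Icc (0:ℝ) T₀ → E)
    (F : (Set.Icc (0:ℝ) T₀ → E) → (Set.Icc (0:ℝ) T₀ → E'))
    (hFmeas : Measurable F)
    (hFcausal : ∀ (τ : Set.Icc (0:ℝ) T₀) (x x' : Set.Icc (0:ℝ) T₀ → E),
      (∀ s, s ≤ τ → x s = x' s) → ∀ s, s ≤ τ → F x s = F x' s)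
    (t : Set.Icc (0:ℝ) T₀) :
    (⨆ s : Set.Icc (0:ℝ) T₀, ⨆ _ : s ≤ t,
        MeasurableSpace.comap (fun ω => F (w ω) s) inferInstance) ≤
      ⨆ s : Set.Icc (0:ℝ) T₀, ⨆ _ : s ≤ t,
        MeasurableSpace.comap (fun ω => w ω s) inferInstance := by
  set M : MeasurableSpace Ω :=
    ⨆ s : Set.Icc (0:ℝ) T₀, ⨆ _ : s ≤ t,
      MeasurableSpace.comap (fun ω => w ω s) inferInstance with hM
  -- the stopped path
  set z : Ω → Set.Icc (0:ℝ) T₀ → E := fun ω u => w ω (min u t) with hzdef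
  have hz : @Measurable Ω _ M _ z := by
    apply measurable_pi_lambda
    intro u
    have h1 : MeasurableSpace.comap (fun ω => w ω (min u t)) inferInstance ≤ M := by
      rw [hM]
      exact le_iSup₂_of_le (min u t) (min_le_right u t) le_rfl
    exact fun s hs => h1 _ ⟨s, hs, rfl⟩
  have hFz : @Measurable Ω _ M _ (fun ω => F (z ω)) := hFmeas.comp hz
  apply iSup₂_le
  intro s hs
  have heq : (fun ω => F (w ω) s) = fun ω => F (z ω) s := by
    funext ω
    exact (hFcausal t (z ω) (w ω)
      (fun u hu => by simp [hzdef, min_eq_left hu]) s hs).symm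
  rw [heq, ← measurable_iff_comap_le]
  exact (measurable_pi_apply s).comp hFz

/-- if `y = F ∘ y₀` where `F` is a measurable causal bijection between path
spaces with measurable causal inverse, then the natural filtrations of `y` and `y₀` coincide:
`σ{y(s), s ≤ t} = σ{y₀(s), s ≤ t}` for all `t ∈ [0,T₀]`. -/
theorem stmt_6 {Ω E E' : Type*} [MeasurableSpace Ω] [MeasurableSpace E] [MeasurableSpace E']
    (T₀ : ℝ) (hT₀ : 0 < T₀)
    (y₀ : Ω → Set.Icc (0:ℝ) T₀ → E) (hy₀ : Measurable y₀)
    (F : (Set.Icc (0:ℝ) T₀ → E) → (Set.Icc (0:ℝ) T₀ → E'))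
    (hFbij : Function.Bijective F)
    (Finv : (Set.Icc (0:ℝ) T₀ → E') → (Set.Icc (0:ℝ) T₀ → E))
    (hFinv₁ : Function.LeftInverse Finv F)
    (hFinv₂ : Function.RightInverse Finv F)
    (hFmeas : Measurable F) (hFinvmeas : Measurable Finv)
    (hFcausal : ∀ (τ : Set.Icc (0:ℝ) T₀) (x x' : Set.Icc (0:ℝ) T₀ → E),
      (∀ s, s ≤ τ → x s = x' s) → ∀ s, s ≤ τ → F x s = F x' s)
    (hFinvcausal : ∀ (τ : Set.Icc (0:ℝ) T₀) (x x' : Set.Icc (0:ℝ) T₀ → E'),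
      (∀ s, s ≤ τ → x s = x' s) → ∀ s, s ≤ τ → Finv x s = Finv x' s)
    (y : Ω → Set.Icc (0:ℝ) T₀ → E') (hy : y = F ∘ y₀) :
    ∀ t : Set.Icc (0:ℝ) T₀,
      (⨆ s : Set.Icc (0:ℝ) T₀, ⨆ _ : s ≤ t,
          MeasurableSpace.comap (fun ω => y ω s) inferInstance) =
        ⨆ s : Set.Icc (0:ℝ) T₀, ⨆ _ : s ≤ t,
          MeasurableSpace.comap (fun ω => y₀ ω s) inferInstance := by
  subst hy
  intro t
  apply le_antisymm
  · exact stmt_6_aux y₀ F hFmeas hFcausal t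
  · have h := stmt_6_aux (fun ω => F (y₀ ω)) Finv hFinvmeas hFinvcausal t
    have heq : (fun (ω : Ω) (s : Set.Icc (0:ℝ) T₀) => Finv (F (y₀ ω)) s) = y₀ := by
      funext ω s; rw [hFinv₁ (y₀ ω)]
    simpa only [hFinv₁ _, Function.comp_apply] using h
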